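/- Let p_1, p_2, p_4 form an equilateral triangle of side length 1 in the plane and let p_3 be its centroid. For every orientation of the complete graph K_4 on these four points, the oriented dilation is at least 2√3 − 2; moreover there exists an orientation achieving dilation exactly 2√3 − 2. -/

import Mathlib

/-- A closed walk of combinatorial length `L ≥ 1` in the digraph `E`. -/
def IsClosedWalk {V : Type*} (E : V → V → Prop) (L : ℕ) (c : ℕ → V) : Prop :=
  1 ≤ L ∧ c L = c 0 ∧ ∀ t < L, E (c t) (c (t + 1))

/-- An orientation of the complete graph: for distinct vertices exactly one of the two
directions is present. -/
def IsOrientation (o : Fin 4 → Fin 4 → Prop) : Prop :=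
  ∀ i j : Fin 4, i ≠ j → (o i j ↔ ¬o j i)

/-- Perimeter of the triangle through `p i`, `p j` and the third point `p k`. -/
noncomputable def perim (p : Fin 4 → EuclideanSpace ℝ (Fin 2)) (i j k : Fin 4) : ℝ :=
  dist (p i) (p j) + dist (p i) (p k) + dist (p k) (p j)

/- ------------------------------------------------------------------
   Auxiliary machinery: arithmetic in ℤ[√3]/3 represented as pairs,
   tournaments on `Fin 4`, Bellman–Ford style potentials, and a
   decidable master lemma covering all 64 tournaments.
   ------------------------------------------------------------------ -/

abbrev Q3 := ℤ × ℤ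

/-- `(a, b)` represents the real number `a + b * √3 / 3`. -/
noncomputable def q3val (q : Q3) : ℝ := q.1 + q.2 * (Real.sqrt 3 / 3)

def q3add (x y : Q3) : Q3 := (x.1 + y.1, x.2 + y.2)
def q3sub (x y : Q3) : Q3 := (x.1 - y.1, x.2 - y.2)

def q3nn (q : Q3) : Bool :=
  if 0 ≤ q.1 then (if 0 ≤ q.2 then true else decide (q.2 ^ 2 ≤ 3 * q.1 ^ 2))
  else (if 0 ≤ q.2 then decide (3 * q.1 ^ 2 ≤ q.2 ^ 2) else false)

def q3le (x y : Q3) : Bool := q3nn (y.1 - x.1, y.2 - x.2)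

def q3min (x y : Q3) : Q3 := if q3le x y then x else y

def wq (u v : Fin 4) : Q3 :=
  if u = v then (0, 0) else if u = 2 ∨ v = 2 then (0, 1) else (1, 0)

def relax (E : Fin 4 → Fin 4 → Bool) (φ : Fin 4 → Q3) : Fin 4 → Q3 := fun v =>
  List.foldl (fun acc u => if E u v then q3min acc (q3add (φ u) (wq u v)) else acc)
    (φ v) [0, 1, 2, 3]

def bf (E : Fin 4 → Fin 4 → Bool) (i : Fin 4) : Fin 4 → Q3 :=
  (relax E)^[4] (fun v => if v = i then (0, 0) else (10, 0))

def feasB (E : Fin 4 → Fin 4 → Bool) (φ : Fin 4 → Q3) : Bool :=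
  decide (∀ u v : Fin 4, E u v = true → q3le (φ v) (q3add (φ u) (wq u v)) = true)

def good (E : Fin 4 → Fin 4 → Bool) (i j : Fin 4) : Bool :=
  feasB E (bf E i) && feasB E (bf E j) &&
    q3le (2, 2) (q3sub (q3add (bf E i j) (bf E j i)) (q3add (bf E i i) (bf E j j)))

def tourOf (b0 b1 b2 b3 b4 b5 : Bool) : Fin 4 → Fin 4 → Bool := fun u v =>
  match u.val, v.val with
  | 0, 1 => b0
  | 1, 0 => !b0
  | 0, 2 => b1
  | 2, 0 => !b1
  | 0, 3 => b2
  | 3, 0 => !b2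
  | 1, 2 => b3
  | 2, 1 => !b3
  | 1, 3 => b4
  | 3, 1 => !b4
  | 2, 3 => b5
  | 3, 2 => !b5
  | _, _ => false

set_option maxRecDepth 100000 in
set_option maxHeartbeats 4000000 in
theorem master : ∀ b0 b1 b2 b3 b4 b5 : Bool, ∃ i j k : Fin 4,
    i ≠ j ∧ k ≠ i ∧ k ≠ j ∧ (i = 2 ∨ j = 2 ∨ k = 2) ∧
      good (tourOf b0 b1 b2 b3 b4 b5) i j = true := by
  intro b0 b1 b2 b3 b4 b5
  cases b0 <;> cases b1 <;> cases b2 <;> cases b3 <;> cases b4 <;> cases b5 <;> decide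

lemma q3nn_sound {q : Q3} (h : q3nn q = true) : 0 ≤ q3val q := by
  have hs3 : Real.sqrt 3 ^ 2 = 3 := Real.sq_sqrt (by norm_num)
  have hs0 : (0:ℝ) ≤ Real.sqrt 3 := Real.sqrt_nonneg 3
  have hs1 : (1:ℝ) ≤ Real.sqrt 3 := by nlinarith
  unfold q3nn at h
  unfold q3val
  split_ifs at h with h1 h2 h3
  · have ha : (0:ℝ) ≤ q.1 := by exact_mod_cast h1
    have hb : (0:ℝ) ≤ q.2 := by exact_mod_cast h2
    have : (0:ℝ) ≤ Real.sqrt 3 / 3 := by positivity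
    nlinarith
  · have ha : (0:ℝ) ≤ q.1 := by exact_mod_cast h1
    have hb : (q.2:ℝ) < 0 := by exact_mod_cast not_le.mp h2
    have hc : ((q.2:ℝ)) ^ 2 ≤ 3 * (q.1:ℝ) ^ 2 := by exact_mod_cast of_decide_eq_true h
    by_contra hneg
    push_neg at hneg
    have h4 : 0 < (q.1:ℝ) - (q.2:ℝ) * (Real.sqrt 3 / 3) := by nlinarith
    nlinarith [mul_pos h4 (by linarith : (0:ℝ) < -((q.1:ℝ) + (q.2:ℝ) * (Real.sqrt 3 / 3)))]
  · have ha : ((q.1:ℝ)) < 0 := by exact_mod_cast not_le.mp h1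
    have hb : (0:ℝ) ≤ (q.2:ℝ) := by exact_mod_cast h3
    have hc : 3 * ((q.1:ℝ)) ^ 2 ≤ (q.2:ℝ) ^ 2 := by exact_mod_cast of_decide_eq_true h
    by_contra hneg
    push_neg at hneg
    have h4 : (0:ℝ) ≤ (q.2:ℝ) * (Real.sqrt 3 / 3) := by positivity
    have h5 : (0:ℝ) < -((q.1:ℝ) + (q.2:ℝ) * (Real.sqrt 3 / 3)) := by linarith
    have h6 : (0:ℝ) < -(q.1:ℝ) + (q.2:ℝ) * (Real.sqrt 3 / 3) := by linarith
    nlinarith [mul_pos h5 h6]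

lemma q3le_sound {x y : Q3} (h : q3le x y = true) : q3val x ≤ q3val y := by
  have := q3nn_sound (q := (y.1 - x.1, y.2 - x.2)) h
  unfold q3val at this ⊢
  push_cast at this ⊢
  linarith

lemma q3val_add (x y : Q3) : q3val (q3add x y) = q3val x + q3val y := by
  unfold q3val q3add; push_cast; ring

lemma q3val_sub (x y : Q3) : q3val (q3sub x y) = q3val x - q3val y := by
  unfold q3val q3sub; push_cast; ring

lemma seg_bound {E : Fin 4 → Fin 4 → Prop} {w : Fin 4 → Fin 4 → ℝ} {φ : Fin 4 → ℝ}
    (hfeas : ∀ u v, E u v → φ v ≤ φ u + w u v) {L : ℕ} {c : ℕ → Fin 4}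
    (hc : ∀ t < L, E (c t) (c (t + 1))) (a : ℕ) :
    ∀ b, a ≤ b → b ≤ L →
      φ (c b) ≤ φ (c a) + ∑ t ∈ Finset.Ico a b, w (c t) (c (t + 1)) := by
  intro b hab
  induction b, hab using Nat.le_induction with
  | base => intro _; simp
  | succ n hn ih =>
    intro hnL
    rw [Finset.sum_Ico_succ_top hn]
    have h2 := hfeas (c n) (c (n + 1)) (hc n (by omega))
    have h1 := ih (by omega)
    linarith

/-- Walks used for the sharp orientation. -/
def c012 : ℕ → Fin 4 := fun t => if t = 1 then 1 else if t = 2 then 2 else 0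
def c013 : ℕ → Fin 4 := fun t => if t = 1 then 1 else if t = 2 then 3 else 0
def c4w : ℕ → Fin 4 := fun t => if t = 1 then 3 else if t = 2 then 0 else if t = 3 then 1 else 2

set_option maxHeartbeats 2000000 in
theorem stmt12 (p : Fin 4 → EuclideanSpace ℝ (Fin 2))
    (h01 : dist (p 0) (p 1) = 1) (h13 : dist (p 1) (p 3) = 1)
    (h03 : dist (p 0) (p 3) = 1)
    (hcent : p 2 = (3 : ℝ)⁻¹ • (p 0 + p 1 + p 3)) :
    (∀ o : Fin 4 → Fin 4 → Prop, IsOrientation o →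
      ∃ i j : Fin 4, i ≠ j ∧
        ∀ (L : ℕ) (c : ℕ → Fin 4), IsClosedWalk o L c →
          (∃ t < L, c t = i) → (∃ t < L, c t = j) →
          ∃ k : Fin 4, k ≠ i ∧ k ≠ j ∧
            (2 * Real.sqrt 3 - 2) * perim p i j k ≤
              ∑ t ∈ Finset.range L, dist (p (c t)) (p (c (t + 1)))) ∧
    (∃ o : Fin 4 → Fin 4 → Prop, IsOrientation o ∧
      ∀ i j : Fin 4, i ≠ j →
        ∃ (L : ℕ) (c : ℕ → Fin 4), IsClosedWalk o L c ∧
          (∃ t < L, c t = i) ∧ (∃ t < L, c t = j) ∧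
          ∀ k : Fin 4, k ≠ i → k ≠ j →
            (∑ t ∈ Finset.range L, dist (p (c t)) (p (c (t + 1)))) ≤
              (2 * Real.sqrt 3 - 2) * perim p i j k) := by
  have hs3 : Real.sqrt 3 ^ 2 = 3 := Real.sq_sqrt (by norm_num)
  have hs0 : (0:ℝ) ≤ Real.sqrt 3 := Real.sqrt_nonneg 3
  have hs1 : (1:ℝ) ≤ Real.sqrt 3 := by nlinarith
  -- vectors of the outer triangle
  have ha : ‖p 1 - p 0‖ = 1 := by rw [← dist_eq_norm, dist_comm]; exact h01
  have hb : ‖p 3 - p 0‖ = 1 := by rw [← dist_eq_norm, dist_comm]; exact h03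
  have hab : ‖(p 1 - p 0) - (p 3 - p 0)‖ = 1 := by
    have h : (p 1 - p 0) - (p 3 - p 0) = p 1 - p 3 := by abel
    rw [h, ← dist_eq_norm]; exact h13
  have hinner : (inner ℝ (p 1 - p 0) (p 3 - p 0) : ℝ) = 1 / 2 := by
    have h := norm_sub_sq_real (p 1 - p 0) (p 3 - p 0)
    rw [hab, ha, hb] at h
    simp only [one_pow] at h
    linarith
  have hnorm3 : ∀ v : EuclideanSpace ℝ (Fin 2), ‖v‖ ^ 2 = 3 → ‖v‖ = Real.sqrt 3 := by
    intro v hv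
    rw [← Real.sqrt_sq (norm_nonneg v), hv]
  have hd : ∀ w : EuclideanSpace ℝ (Fin 2), ‖w‖ ^ 2 = 3 →
      ‖(3:ℝ)⁻¹ • w‖ = Real.sqrt 3 / 3 := by
    intro w hw
    rw [norm_smul, Real.norm_eq_abs, hnorm3 w hw, abs_of_pos (by norm_num)]
    ring
  have d20 : dist (p 2) (p 0) = Real.sqrt 3 / 3 := by
    have hv : p 2 - p 0 = (3:ℝ)⁻¹ • ((p 1 - p 0) + (p 3 - p 0)) := by
      rw [hcent]; module
    have hw : ‖(p 1 - p 0) + (p 3 - p 0)‖ ^ 2 = 3 := by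
      rw [norm_add_sq_real, ha, hb, hinner]; norm_num
    rw [dist_eq_norm, hv]; exact hd _ hw
  have d21 : dist (p 2) (p 1) = Real.sqrt 3 / 3 := by
    have hv : p 2 - p 1 = (3:ℝ)⁻¹ • ((p 3 - p 0) - (2:ℝ) • (p 1 - p 0)) := by
      rw [hcent]; module
    have hw : ‖(p 3 - p 0) - (2:ℝ) • (p 1 - p 0)‖ ^ 2 = 3 := by
      rw [norm_sub_sq_real, real_inner_smul_right, norm_smul, hb, ha,
        real_inner_comm, hinner, Real.norm_eq_abs]
      norm_num
    rw [dist_eq_norm, hv]; exact hd _ hw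
  have d23 : dist (p 2) (p 3) = Real.sqrt 3 / 3 := by
    have hv : p 2 - p 3 = (3:ℝ)⁻¹ • ((p 1 - p 0) - (2:ℝ) • (p 3 - p 0)) := by
      rw [hcent]; module
    have hw : ‖(p 1 - p 0) - (2:ℝ) • (p 3 - p 0)‖ ^ 2 = 3 := by
      rw [norm_sub_sq_real, real_inner_smul_right, norm_smul, ha, hb,
        hinner, Real.norm_eq_abs]
      norm_num
    rw [dist_eq_norm, hv]; exact hd _ hw
  have d10 : dist (p 1) (p 0) = 1 := by rw [dist_comm]; exact h01
  have d31 : dist (p 3) (p 1) = 1 := by rw [dist_comm]; exact h13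
  have d30 : dist (p 3) (p 0) = 1 := by rw [dist_comm]; exact h03
  have d02 : dist (p 0) (p 2) = Real.sqrt 3 / 3 := by rw [dist_comm]; exact d20
  have d12 : dist (p 1) (p 2) = Real.sqrt 3 / 3 := by rw [dist_comm]; exact d21
  have d32 : dist (p 3) (p 2) = Real.sqrt 3 / 3 := by rw [dist_comm]; exact d23
  have dcen : ∀ v : Fin 4, v ≠ 2 → dist (p 2) (p v) = Real.sqrt 3 / 3 := by
    have e : ∀ m : Fin 4, m ≠ 2 → m = 0 ∨ m = 1 ∨ m = 3 := by decide
    intro v hv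
    rcases e v hv with rfl | rfl | rfl
    · exact d20
    · exact d21
    · exact d23
  have dcen' : ∀ v : Fin 4, v ≠ 2 → dist (p v) (p 2) = Real.sqrt 3 / 3 := by
    intro v hv; rw [dist_comm]; exact dcen v hv
  have douter : ∀ u v : Fin 4, u ≠ v → u ≠ 2 → v ≠ 2 → dist (p u) (p v) = 1 := by
    have e : ∀ u v : Fin 4, u ≠ v → u ≠ 2 → v ≠ 2 →
        (u = 0 ∧ v = 1) ∨ (u = 1 ∧ v = 0) ∨ (u = 0 ∧ v = 3) ∨ (u = 3 ∧ v = 0) ∨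
        (u = 1 ∧ v = 3) ∨ (u = 3 ∧ v = 1) := by decide
    intro u v h1 h2 h3
    rcases e u v h1 h2 h3 with ⟨rfl, rfl⟩ | ⟨rfl, rfl⟩ | ⟨rfl, rfl⟩ | ⟨rfl, rfl⟩ |
      ⟨rfl, rfl⟩ | ⟨rfl, rfl⟩
    · exact h01
    · exact d10
    · exact h03
    · exact d30
    · exact h13
    · exact d31
  have q01 : q3val (0, 1) = Real.sqrt 3 / 3 := by norm_num [q3val]
  have q10 : q3val (1, 0) = 1 := by norm_num [q3val]
  have dtable : ∀ u v : Fin 4, u ≠ v → q3val (wq u v) = dist (p u) (p v) := by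
    intro u v huv
    unfold wq
    rw [if_neg huv]
    by_cases hu : u = 2
    · subst hu
      rw [if_pos (Or.inl rfl), q01]
      exact (dcen v (fun h => huv h.symm)).symm
    · by_cases hv : v = 2
      · subst hv
        rw [if_pos (Or.inr rfl), q01]
        exact (dcen' u hu).symm
      · rw [if_neg (by tauto), q10]
        exact (douter u v huv hu hv).symm
  constructor
  · -- lower bound: every orientation has a bad pair
    intro o hOr
    classical
    obtain ⟨i, j, k, hij, hki, hkj, h2, hgood⟩ :=
      master (decide (o 0 1)) (decide (o 0 2)) (decide (o 0 3))
        (decide (o 1 2)) (decide (o 1 3)) (decide (o 2 3))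
    set E : Fin 4 → Fin 4 → Bool :=
      tourOf (decide (o 0 1)) (decide (o 0 2)) (decide (o 0 3))
        (decide (o 1 2)) (decide (o 1 3)) (decide (o 2 3)) with hE
    have hEdge : ∀ u v : Fin 4, u ≠ v → o u v → E u v = true := by
      intro u v huv ho'
      fin_cases u <;> fin_cases v <;>
        first
          | exact absurd rfl huv
          | exact decide_eq_true ho'
          | (show (!(decide (o _ _))) = true
             rw [Bool.not_eq_true', decide_eq_false_iff_not]
             exact (hOr _ _ huv).mp ho')
    simp only [good, Bool.and_eq_true] at hgood
    obtain ⟨⟨hfi, hfj⟩, hobj⟩ := hgood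
    refine ⟨i, j, hij, ?_⟩
    intro L c hwalk hti htj
    obtain ⟨hL1, hcL, hedge⟩ := hwalk
    obtain ⟨t1, ht1L, ht1⟩ := hti
    obtain ⟨t2, ht2L, ht2⟩ := htj
    refine ⟨k, hki, hkj, ?_⟩
    have hperim : perim p i j k = 1 + 2 * (Real.sqrt 3 / 3) := by
      unfold perim
      rcases h2 with h | h | h
      · subst h
        rw [dcen j (Ne.symm hij), dcen k hki, douter k j hkj hki (Ne.symm hij)]
        ring
      · subst h
        rw [dcen' i hij, douter i k (Ne.symm hki) hij hkj, dcen' k hkj]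
        ring
      · subst h
        rw [douter i j hij (Ne.symm hki) (Ne.symm hkj), dcen' i (Ne.symm hki),
          dcen j (Ne.symm hkj)]
        ring
    have hO := q3le_sound hobj
    rw [q3val_sub, q3val_add, q3val_add] at hO
    have h22 : q3val ((2, 2) : Q3) = 2 + 2 * (Real.sqrt 3 / 3) := by norm_num [q3val]
    rw [h22] at hO
    have hfeasR : ∀ A : Fin 4 → Q3, feasB E A = true →
        ∀ u v : Fin 4, o u v → q3val (A v) ≤ q3val (A u) + dist (p u) (p v) := by
      intro A hA u v ho'
      by_cases huv : u = v
      · subst huv; simp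
      · have h1 := of_decide_eq_true hA u v (hEdge u v huv ho')
        have h2' := q3le_sound h1
        rw [q3val_add, dtable u v huv] at h2'
        exact h2'
    have hkey : ∀ A B : Fin 4 → Q3, feasB E A = true → feasB E B = true →
        ∀ s t' : ℕ, s ≤ t' → t' < L →
        q3val (A (c t')) - q3val (A (c s)) + q3val (B (c s)) - q3val (B (c t'))
          ≤ ∑ t ∈ Finset.range L, dist (p (c t)) (p (c (t + 1))) := by
      intro A B hA hB s t' hst ht'
      have b1 := seg_bound (hfeasR A hA) hedge s t' hst (le_of_lt ht')
      have b2 := seg_bound (hfeasR B hB) hedge t' L (le_of_lt ht') le_rfl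
      have b3 := seg_bound (hfeasR B hB) hedge 0 s (Nat.zero_le s) (by omega)
      rw [hcL] at b2
      rw [Finset.range_eq_Ico,
        ← Finset.sum_Ico_consecutive _ (Nat.zero_le t') (le_of_lt ht'),
        ← Finset.sum_Ico_consecutive _ (Nat.zero_le s) hst]
      linarith
    rw [hperim]
    have heq : (2 * Real.sqrt 3 - 2) * (1 + 2 * (Real.sqrt 3 / 3))
        = 2 + 2 * (Real.sqrt 3 / 3) := by
      linear_combination (4/3 : ℝ) * hs3
    rw [heq]
    rcases le_total t1 t2 with hle | hle
    · have hK := hkey (bf E i) (bf E j) hfi hfj t1 t2 hle ht2L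
      rw [ht1, ht2] at hK
      linarith
    · have hK := hkey (bf E j) (bf E i) hfj hfi t2 t1 hle ht1L
      rw [ht1, ht2] at hK
      linarith
  · -- upper bound: the sharp orientation
    refine ⟨fun u v => tourOf true false false true true true u v = true, ?_, ?_⟩
    · have h : ∀ i j : Fin 4, i ≠ j →
          ((tourOf true false false true true true i j = true) ↔
            ¬(tourOf true false false true true true j i = true)) := by decide
      exact h
    · intro i j hij
      have ek : ∀ m : Fin 4, m ≠ 0 → m ≠ 1 → m = 2 ∨ m = 3 := by decide
      have ek2 : ∀ m : Fin 4, m ≠ 0 → m ≠ 2 → m = 1 ∨ m = 3 := by decide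
      have ek3 : ∀ m : Fin 4, m ≠ 1 → m ≠ 2 → m = 0 ∨ m = 3 := by decide
      have ek4 : ∀ m : Fin 4, m ≠ 0 → m ≠ 3 → m = 1 ∨ m = 2 := by decide
      have ek5 : ∀ m : Fin 4, m ≠ 1 → m ≠ 3 → m = 0 ∨ m = 2 := by decide
      have ek6 : ∀ m : Fin 4, m ≠ 2 → m ≠ 3 → m = 0 ∨ m = 1 := by decide
      have W1 : IsClosedWalk (fun u v => tourOf true false false true true true u v = true)
          3 c012 := ⟨by norm_num, rfl, by decide⟩
      have W2 : IsClosedWalk (fun u v => tourOf true false false true true true u v = true)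
          3 c013 := ⟨by norm_num, rfl, by decide⟩
      have W4 : IsClosedWalk (fun u v => tourOf true false false true true true u v = true)
          4 c4w := ⟨by norm_num, rfl, by decide⟩
      have S1 : ∑ t ∈ Finset.range 3, dist (p (c012 t)) (p (c012 (t + 1)))
          = 1 + 2 * (Real.sqrt 3 / 3) := by
        rw [Finset.sum_range_succ, Finset.sum_range_succ, Finset.sum_range_one]
        show dist (p 0) (p 1) + dist (p 1) (p 2) + dist (p 2) (p 0) = _
        rw [h01, d12, d20]; ring
      have S2 : ∑ t ∈ Finset.range 3, dist (p (c013 t)) (p (c013 (t + 1)))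
          = 3 := by
        rw [Finset.sum_range_succ, Finset.sum_range_succ, Finset.sum_range_one]
        show dist (p 0) (p 1) + dist (p 1) (p 3) + dist (p 3) (p 0) = _
        rw [h01, h13, d30]; ring
      have S4 : ∑ t ∈ Finset.range 4, dist (p (c4w t)) (p (c4w (t + 1)))
          = 2 + 2 * (Real.sqrt 3 / 3) := by
        rw [Finset.sum_range_succ, Finset.sum_range_succ, Finset.sum_range_succ,
          Finset.sum_range_one]
        show dist (p 2) (p 3) + dist (p 3) (p 0) + dist (p 0) (p 1) + dist (p 1) (p 2) = _
        rw [d23, d30, h01, d12]; ring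
      have epair : ∀ a b : Fin 4, a ≠ b →
          (a = 0 ∧ b = 1) ∨ (a = 1 ∧ b = 0) ∨ (a = 0 ∧ b = 2) ∨ (a = 2 ∧ b = 0) ∨
          (a = 1 ∧ b = 2) ∨ (a = 2 ∧ b = 1) ∨ (a = 0 ∧ b = 3) ∨ (a = 3 ∧ b = 0) ∨
          (a = 1 ∧ b = 3) ∨ (a = 3 ∧ b = 1) ∨ (a = 2 ∧ b = 3) ∨ (a = 3 ∧ b = 2) := by
        decide
      rcases epair i j hij with ⟨rfl, rfl⟩ | ⟨rfl, rfl⟩ | ⟨rfl, rfl⟩ | ⟨rfl, rfl⟩ |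
        ⟨rfl, rfl⟩ | ⟨rfl, rfl⟩ | ⟨rfl, rfl⟩ | ⟨rfl, rfl⟩ | ⟨rfl, rfl⟩ | ⟨rfl, rfl⟩ |
        ⟨rfl, rfl⟩ | ⟨rfl, rfl⟩
      · -- (0,1)
        refine ⟨3, c012, W1, ⟨0, by norm_num, rfl⟩, ⟨1, by norm_num, rfl⟩, ?_⟩
        intro k hk1 hk2
        rw [S1]
        rcases ek k hk1 hk2 with rfl | rfl <;> unfold perim
        · rw [h01, d02, d21]; nlinarith
        · rw [h01, h03, d31]; nlinarith
      · -- (1,0)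
        refine ⟨3, c012, W1, ⟨1, by norm_num, rfl⟩, ⟨0, by norm_num, rfl⟩, ?_⟩
        intro k hk1 hk2
        rw [S1]
        rcases ek k hk2 hk1 with rfl | rfl <;> unfold perim
        · rw [d10, d12, d20]; nlinarith
        · rw [d10, h13, d30]; nlinarith
      · -- (0,2)
        refine ⟨3, c012, W1, ⟨0, by norm_num, rfl⟩, ⟨2, by norm_num, rfl⟩, ?_⟩
        intro k hk1 hk2
        rw [S1]
        rcases ek2 k hk1 hk2 with rfl | rfl <;> unfold perim
        · rw [d02, h01, d12]; nlinarith
        · rw [d02, h03, d32]; nlinarith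
      · -- (2,0)
        refine ⟨3, c012, W1, ⟨2, by norm_num, rfl⟩, ⟨0, by norm_num, rfl⟩, ?_⟩
        intro k hk1 hk2
        rw [S1]
        rcases ek2 k hk2 hk1 with rfl | rfl <;> unfold perim
        · rw [d20, d21, d10]; nlinarith
        · rw [d20, d23, d30]; nlinarith
      · -- (1,2)
        refine ⟨3, c012, W1, ⟨1, by norm_num, rfl⟩, ⟨2, by norm_num, rfl⟩, ?_⟩
        intro k hk1 hk2
        rw [S1]
        rcases ek3 k hk1 hk2 with rfl | rfl <;> unfold perim
        · rw [d12, d10, d02]; nlinarith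
        · rw [d12, h13, d32]; nlinarith
      · -- (2,1)
        refine ⟨3, c012, W1, ⟨2, by norm_num, rfl⟩, ⟨1, by norm_num, rfl⟩, ?_⟩
        intro k hk1 hk2
        rw [S1]
        rcases ek3 k hk2 hk1 with rfl | rfl <;> unfold perim
        · rw [d21, d20, h01]; nlinarith
        · rw [d21, d23, d31]; nlinarith
      · -- (0,3)
        refine ⟨3, c013, W2, ⟨0, by norm_num, rfl⟩, ⟨2, by norm_num, rfl⟩, ?_⟩
        intro k hk1 hk2
        rw [S2]
        rcases ek4 k hk1 hk2 with rfl | rfl <;> unfold perim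
        · rw [h03, h01, h13]; nlinarith
        · rw [h03, d02, d23]; nlinarith
      · -- (3,0)
        refine ⟨3, c013, W2, ⟨2, by norm_num, rfl⟩, ⟨0, by norm_num, rfl⟩, ?_⟩
        intro k hk1 hk2
        rw [S2]
        rcases ek4 k hk2 hk1 with rfl | rfl <;> unfold perim
        · rw [d30, d31, d10]; nlinarith
        · rw [d30, d32, d20]; nlinarith
      · -- (1,3)
        refine ⟨3, c013, W2, ⟨1, by norm_num, rfl⟩, ⟨2, by norm_num, rfl⟩, ?_⟩
        intro k hk1 hk2
        rw [S2]
        rcases ek5 k hk1 hk2 with rfl | rfl <;> unfold perim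
        · rw [h13, d10, h03]; nlinarith
        · rw [h13, d12, d23]; nlinarith
      · -- (3,1)
        refine ⟨3, c013, W2, ⟨2, by norm_num, rfl⟩, ⟨1, by norm_num, rfl⟩, ?_⟩
        intro k hk1 hk2
        rw [S2]
        rcases ek5 k hk2 hk1 with rfl | rfl <;> unfold perim
        · rw [d31, d30, h01]; nlinarith
        · rw [d31, d32, d21]; nlinarith
      · -- (2,3)
        refine ⟨4, c4w, W4, ⟨0, by norm_num, rfl⟩, ⟨1, by norm_num, rfl⟩, ?_⟩
        intro k hk1 hk2
        rw [S4]
        rcases ek6 k hk1 hk2 with rfl | rfl <;> unfold perim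
        · rw [d23, d20, h03]; nlinarith
        · rw [d23, d21, h13]; nlinarith
      · -- (3,2)
        refine ⟨4, c4w, W4, ⟨1, by norm_num, rfl⟩, ⟨0, by norm_num, rfl⟩, ?_⟩
        intro k hk1 hk2
        rw [S4]
        rcases ek6 k hk2 hk1 with rfl | rfl <;> unfold perim
        · rw [d32, d30, d02]; nlinarith
        · rw [d32, d31, d12]; nlinarith
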